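/- arXiv:math/9706209 — 4 statements merged into one kernel-verified Lean document; each statement's English description precedes it below -/
import Mathlib

section
/- There exists a hereditary collection F of finite subsets of ℕ such that for every infinite subset M = (m_i) of ℕ, both S_1(M) ⊄ F and F(M) ⊄ S_1, where S_1(M) = {{m_i : i ∈ E} : E ∈ S_1} and F(M) = {{m_i : i ∈ E} : E ∈ F}. An explicit example is F = ⋃_{k≥1} { {1} ∪ E, E : E ⊆ F_k } where F_k = {2^k + 1, …, 2^k + k}. -/
open Ordinal Set

/-- 1-indexed increasing enumeration of an (infinite) subset of ℕ. -/
noncomputable def enum1 (M : Set ℕ) (i : ℕ) : ℕ := Nat.nth (· ∈ M) (i - 1)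

/-- A collection of finite subsets of ℕ is hereditary if closed under subsets. -/
def Hereditary (𝓕 : Set (Finset ℕ)) : Prop :=
  ∀ ⦃E F : Finset ℕ⦄, E ⊆ F → F ∈ 𝓕 → E ∈ 𝓕

/-- A collection is spreading if closed under spreadings. -/
def Spreading (𝓕 : Set (Finset ℕ)) : Prop :=
  ∀ F ∈ 𝓕, ∀ (G : Finset ℕ) (h : G.card = F.card),
    (∀ i : Fin F.card, ((F.orderIsoOfFin rfl i : ℕ)) ≤ ((G.orderIsoOfFin h i : ℕ))) → G ∈ 𝓕

/-- `𝓕[N]`: members of `𝓕` that are subsets of `N`. -/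
def restrict (𝓕 : Set (Finset ℕ)) (N : Set ℕ) : Set (Finset ℕ) :=
  {E ∈ 𝓕 | (E : Set ℕ) ⊆ N}

/-- `𝓕(M)`: push the collection `𝓕` onto the infinite set `M` via its increasing
(1-indexed) enumeration. -/
noncomputable def push (𝓕 : Set (Finset ℕ)) (M : Set ℕ) : Set (Finset ℕ) :=
  {F | ∃ E ∈ 𝓕, F = E.image (enum1 M)}

/-- Characteristic function of a finite set, as a point of the Cantor space. -/
def chi (F : Finset ℕ) : ℕ → Bool := fun n => decide (n ∈ F)

/-- Pointwise closedness of a family of finite subsets of ℕ, viewed in `2^ℕ`. -/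
def PtwiseClosed (𝓕 : Set (Finset ℕ)) : Prop := IsClosed (chi '' 𝓕)

/-- An adequate family is hereditary and pointwise closed. -/
def Adequate (𝓕 : Set (Finset ℕ)) : Prop := Hereditary 𝓕 ∧ PtwiseClosed 𝓕

/-- The first Schreier class `S₁ = {F : |F| ≤ min F}` (with `∅ ∈ S₁`). -/
def Schreier1 : Set (Finset ℕ) := {F | ∀ n ∈ F, F.card ≤ n}

/-- A system of Schreier classes `S α` for all ordinals, together with the fixed
cofinal sequences used at limit stages. -/
structure SchreierSystem where
  S : Ordinal → Set (Finset ℕ)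
  seq : Ordinal → ℕ → Ordinal
  seq_lt : ∀ {α : Ordinal}, Order.IsSuccLimit α → ∀ n, seq α n < α
  seq_mono : ∀ {α : Ordinal}, Order.IsSuccLimit α → StrictMono (seq α)
  seq_sup : ∀ {α : Ordinal}, Order.IsSuccLimit α → (⨆ n, seq α n) = α
  zero_def : S 0 = {F | ∃ n : ℕ, 1 ≤ n ∧ F = {n}} ∪ {∅}
  one_def : S 1 = Schreier1
  succ_def : ∀ α : Ordinal, S (α + 1) =
    {F | ∃ (k : ℕ) (Fs : Fin (k + 1) → Finset ℕ),
      F = Finset.univ.biUnion Fs ∧ (∀ i, Fs i ∈ S α) ∧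
      (∀ i j : Fin (k + 1), i < j → ∀ x ∈ Fs i, ∀ y ∈ Fs j, x < y) ∧
      (∀ x ∈ Fs 0, k + 1 ≤ x)}
  limit_def : ∀ α : Ordinal, Order.IsSuccLimit α → S α =
    {F | ∃ n : ℕ, 1 ≤ n ∧ F ∈ S (seq α n) ∧ ∀ m ∈ F, n ≤ m}

/-- Transfinitely iterated strong Cantor–Bendixson derivative of `G[L]`. -/
noncomputable def sDeriv (G : Set (Finset ℕ)) (L : Set ℕ) : Ordinal → Set (Finset ℕ) :=
  fun β => Ordinal.limitRecOn β (restrict G L)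
    (fun _ D => {A ∈ D | {l ∈ L | insert l A ∉ D}.Finite})
    (fun o _ ih => ⋂ (b : Set.Iio o), ih b b.2)

/-- Strong Cantor–Bendixson index of `G[L]`. -/
noncomputable def sIndex (G : Set (Finset ℕ)) (L : Set ℕ) : Ordinal :=
  sInf {β | sDeriv G L β = ∅}

theorem stmt4 :
    ∃ 𝓕 : Set (Finset ℕ), Hereditary 𝓕 ∧
      ∀ M : Set ℕ, M.Infinite →
        ¬ push Schreier1 M ⊆ 𝓕 ∧ ¬ push 𝓕 M ⊆ Schreier1 := by
  refine ⟨{F | ∃ k, 1 ≤ k ∧ F ⊆ insert 1 (Finset.Ioc (2^k) (2^k+k))}, ?_, ?_⟩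
  · rintro E F hEF ⟨k, hk, hF⟩
    exact ⟨k, hk, hEF.trans hF⟩
  · intro M hM
    have hinf : {x | x ∈ M}.Infinite := hM
    have hsm : StrictMono (Nat.nth (· ∈ M)) := Nat.nth_strictMono hinf
    have hge : ∀ n, n ≤ Nat.nth (· ∈ M) n := fun n => hsm.le_apply
    constructor
    · intro hsub
      set m3 := Nat.nth (· ∈ M) 2 with hm3def
      have hm3ge : 2 ≤ m3 := hge 2
      set b := 2 * m3 + 1 with hbdef
      have hb5 : 5 ≤ b := by omega
      have hE : ({3, b} : Finset ℕ) ∈ Schreier1 := by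
        intro n hn
        have hcard : ({3, b} : Finset ℕ).card ≤ 2 :=
          (Finset.card_insert_le _ _).trans (by simp)
        simp only [Finset.mem_insert, Finset.mem_singleton] at hn
        rcases hn with rfl | rfl <;> omega
      obtain ⟨k, hk, hsubset⟩ := hsub ⟨_, hE, rfl⟩
      have henum3 : enum1 M 3 = m3 := rfl
      have henumb : enum1 M b = Nat.nth (· ∈ M) (2 * m3) := by
        simp [enum1, hbdef]
      have h3mem : m3 ∈ insert 1 (Finset.Ioc (2^k) (2^k+k)) := by
        refine hsubset (Finset.mem_image.2 ⟨3, by simp, henum3⟩)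
      have hbmem : Nat.nth (· ∈ M) (2 * m3) ∈ insert 1 (Finset.Ioc (2^k) (2^k+k)) := by
        refine hsubset (Finset.mem_image.2 ⟨b, by simp, henumb⟩)
      have hmb : 2 * m3 ≤ Nat.nth (· ∈ M) (2 * m3) := hge _
      have hk2 : k < 2^k := Nat.lt_two_pow_self
      simp only [Finset.mem_insert, Finset.mem_Ioc] at h3mem hbmem
      rcases h3mem with h1 | ⟨h3a, h3b⟩
      · omega
      rcases hbmem with h1 | ⟨hba, hbb⟩
      · omega
      omega
    · intro hsub
      set m0 := Nat.nth (· ∈ M) 0 with hm0def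
      set k := m0 + 1 with hkdef
      set E := insert 1 (Finset.Ioc (2^k) (2^k+k)) with hEdef
      have hEmem : E ∈ {F | ∃ k, 1 ≤ k ∧ F ⊆ insert 1 (Finset.Ioc (2^k) (2^k+k))} :=
        ⟨k, by omega, subset_rfl⟩
      have hS : E.image (enum1 M) ∈ Schreier1 := hsub ⟨E, hEmem, rfl⟩
      have h1E : (1 : ℕ) ∈ E := by simp [hEdef]
      have hm0mem : m0 ∈ E.image (enum1 M) :=
        Finset.mem_image.2 ⟨1, h1E, rfl⟩
      have hcard := hS m0 hm0mem
      have hpos : ∀ x ∈ E, 1 ≤ x := by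
        intro x hx
        simp only [hEdef, Finset.mem_insert, Finset.mem_Ioc] at hx
        have : 1 ≤ 2^k := Nat.one_le_two_pow
        omega
      have hinj : Set.InjOn (enum1 M) E := by
        intro x hx y hy hxy
        have hx1 := hpos x hx
        have hy1 := hpos y (by simpa using hy)
        have := hsm.injective hxy
        omega
      have hco : (E.image (enum1 M)).card = k + 1 := by
        rw [Finset.card_image_of_injOn hinj, hEdef,
          Finset.card_insert_of_notMem, Nat.card_Ioc]
        · omega
        · simp only [Finset.mem_Ioc, not_and]
          intro h
          have : 1 ≤ 2^k := Nat.one_le_two_pow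
          omega
      omega
end

section
/- For every infinite subset M = (m_i)_{i=1}^∞ of ℕ (listed increasingly), setting l = m_1 and F = {m_1} ∪ {m_j : j ∈ F_l} where F_l = {2^l+1, …, 2^l+l}, one has |F| = l + 1 > min F, hence F ∉ S_1, while F belongs to the family 𝔽 = ⋃_{k≥1}{ {1} ∪ E, E : E ⊆ F_k } pushed onto M; in particular 𝔽(M) ⊄ S_1. -/
open Ordinal Set

theorem stmt6 (M : Set ℕ) (hM : M.Infinite) (l : ℕ) (F : Finset ℕ)
    (hl : l = enum1 M 1)
    (hF : F = insert (enum1 M 1)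
      ((Finset.Ioc (2 ^ l) (2 ^ l + l)).image (enum1 M))) :
    F.card = l + 1 ∧ (∃ n ∈ F, n < F.card) ∧ F ∉ Schreier1 ∧
      F ∈ push {A : Finset ℕ | ∃ k : ℕ, 1 ≤ k ∧
        (A ⊆ Finset.Ioc (2 ^ k) (2 ^ k + k) ∨
          ∃ E ⊆ Finset.Ioc (2 ^ k) (2 ^ k + k), A = insert 1 E)} M ∧
      ¬ push {A : Finset ℕ | ∃ k : ℕ, 1 ≤ k ∧
        (A ⊆ Finset.Ioc (2 ^ k) (2 ^ k + k) ∨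
          ∃ E ⊆ Finset.Ioc (2 ^ k) (2 ^ k + k), A = insert 1 E)} M ⊆ Schreier1 := by
  have hMset : (setOf (· ∈ M)).Infinite := hM
  have hmono : StrictMono (Nat.nth (· ∈ M)) := Nat.nth_strictMono hMset
  have hpow : 1 ≤ 2 ^ l := Nat.one_le_two_pow
  have hlt : ∀ i ∈ Finset.Ioc (2 ^ l) (2 ^ l + l), enum1 M 1 < enum1 M i := by
    intro i hi
    simp only [Finset.mem_Ioc] at hi
    exact hmono (by omega : 1 - 1 < i - 1)
  have hinj : Set.InjOn (enum1 M) (Finset.Ioc (2 ^ l) (2 ^ l + l)) := by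
    intro i hi j hj hij
    simp only [Finset.coe_Ioc, Set.mem_Ioc] at hi hj
    have := hmono.injective hij
    omega
  have hnotmem : enum1 M 1 ∉ (Finset.Ioc (2 ^ l) (2 ^ l + l)).image (enum1 M) := by
    simp only [Finset.mem_image]
    rintro ⟨i, hi, hei⟩
    exact absurd hei (hlt i hi).ne'
  have hcard : F.card = l + 1 := by
    rw [hF, Finset.card_insert_of_notMem hnotmem,
      Finset.card_image_of_injOn hinj, Nat.card_Ioc]
    omega
  have hlF : l ∈ F := by rw [hF, hl]; exact Finset.mem_insert_self _ _
  have hex : ∃ n ∈ F, n < F.card := ⟨l, hlF, by omega⟩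
  have hnotS : F ∉ Schreier1 := by
    intro h
    obtain ⟨n, hn, hn2⟩ := hex
    exact absurd (h n hn) (by omega)
  have hpush : F ∈ push {A : Finset ℕ | ∃ k : ℕ, 1 ≤ k ∧
      (A ⊆ Finset.Ioc (2 ^ k) (2 ^ k + k) ∨
        ∃ E ⊆ Finset.Ioc (2 ^ k) (2 ^ k + k), A = insert 1 E)} M := by
    refine ⟨insert 1 (Finset.Ioc (2 ^ l) (2 ^ l + l)), ⟨max l 1, le_max_right _ _,
      Or.inr ⟨Finset.Ioc (2 ^ l) (2 ^ l + l), ?_, rfl⟩⟩, ?_⟩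
    · intro i hi
      simp only [Finset.mem_Ioc] at hi ⊢
      rcases Nat.eq_zero_or_pos l with h0 | h0
      · omega
      · have : max l 1 = l := by omega
        rw [this]; omega
    · rw [hF, Finset.image_insert]
  exact ⟨hcard, hex, hnotS, hpush, fun h => hnotS (h hpush)⟩
end

section
/- (Dichotomy for S_1.) For every hereditary collection F of finite subsets of ℕ and every infinite N̄ ⊆ ℕ, either there exists an infinite M = (m_i) ⊆ N̄ such that S_1(M) = {{m_i : i ∈ E} : E ∈ S_1} ⊆ F, or there exist infinite M ⊆ N̄ and N = (n_i) ⊆ ℕ such that F[N](M) = {{m_i : i ∈ E} : E ∈ F, E ⊆ N} ⊆ S_1. -/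
open Ordinal Set

/-- Infinite Ramsey theorem for 2 colorings of `k`-element subsets of an infinite set. -/
lemma ramsey_two : ∀ (k : ℕ) (c : Finset ℕ → Bool) (L : Set ℕ), L.Infinite →
    ∃ L', L' ⊆ L ∧ L'.Infinite ∧ ∃ b : Bool,
      ∀ E : Finset ℕ, ↑E ⊆ L' → E.card = k → c E = b := by
  intro k
  induction k with
  | zero =>
    intro c L hL
    refine ⟨L, subset_rfl, hL, c ∅, fun E _ hcard => ?_⟩
    rw [Finset.card_eq_zero] at hcard
    rw [hcard]
  | succ k ih =>
    intro c L hL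
    choose g hg1 hg2 b hb using ih
    have hstep : ∀ T : Set ℕ, T.Infinite → (T \ Set.Iic (sInf T)).Infinite :=
      fun T hT => hT.diff (Set.finite_Iic _)
    let step : {T : Set ℕ // T.Infinite} → {T : Set ℕ // T.Infinite} :=
      fun T => ⟨g (fun E => c (insert (sInf T.1) E)) (T.1 \ Set.Iic (sInf T.1)) (hstep T.1 T.2),
                hg2 _ _ _⟩
    let Tn : ℕ → {T : Set ℕ // T.Infinite} := fun n => step^[n] ⟨L, hL⟩
    let a : ℕ → ℕ := fun n => sInf (Tn n).1
    let bb : ℕ → Bool := fun n =>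
      b (fun E => c (insert (a n) E)) ((Tn n).1 \ Set.Iic (a n)) (hstep _ (Tn n).2)
    have hTsucc : ∀ n, Tn (n + 1) = step (Tn n) := fun n =>
      Function.iterate_succ_apply' step n _
    have hmem : ∀ n, a n ∈ (Tn n).1 := fun n => Nat.sInf_mem (Tn n).2.nonempty
    have hsub : ∀ n, (Tn (n + 1)).1 ⊆ (Tn n).1 \ Set.Iic (a n) := by
      intro n
      rw [hTsucc n]
      exact hg1 _ _ _
    have hcol : ∀ n, ∀ E : Finset ℕ, ↑E ⊆ (Tn (n + 1)).1 → E.card = k →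
        c (insert (a n) E) = bb n := by
      intro n E hE hcard
      rw [hTsucc n] at hE
      exact hb _ _ _ E hE hcard
    have amono : StrictMono a := by
      apply strictMono_nat_of_lt_succ
      intro n
      have := (hsub n (hmem (n + 1))).2
      simpa using this
    have Tanti : ∀ m n, m ≤ n → (Tn n).1 ⊆ (Tn m).1 := by
      intro m n h
      induction n with
      | zero =>
        obtain rfl : m = 0 := Nat.le_zero.mp h
        exact subset_rfl
      | succ n ihn =>
        rcases Nat.lt_or_ge m (n + 1) with h' | h'
        · exact ((hsub n).trans Set.diff_subset).trans (ihn (Nat.lt_succ_iff.mp h'))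
        · obtain rfl : m = n + 1 := le_antisymm h h'
          exact subset_rfl
    obtain ⟨bv, hbv⟩ : ∃ v : Bool, {n | bb n = v}.Infinite := by
      by_contra hcon
      push_neg at hcon
      have h1 : ¬ {n | bb n = true}.Infinite := Set.not_infinite.mpr (hcon true)
      have h2 : ¬ {n | bb n = false}.Infinite := Set.not_infinite.mpr (hcon false)
      rw [Set.not_infinite] at h1 h2
      have : (Set.univ : Set ℕ).Finite := by
        have huniv : (Set.univ : Set ℕ) = {n | bb n = true} ∪ {n | bb n = false} := by
          ext n
          rcases Bool.dichotomy (bb n) with h|h <;> simp [h]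
        rw [huniv]
        exact h1.union h2
      exact Set.infinite_univ this
    refine ⟨a '' {n | bb n = bv}, ?_, hbv.image (amono.injective.injOn), bv, ?_⟩
    · rintro _ ⟨n, _, rfl⟩
      exact Tanti 0 n (Nat.zero_le n) (hmem n)
    · intro E hE hcard
      have hne : E.Nonempty := by
        rw [← Finset.card_pos, hcard]; omega
      set x := E.min' hne with hx
      obtain ⟨n, hnS, hna⟩ := hE (E.min'_mem hne)
      have herase : ↑(E.erase x) ⊆ (Tn (n + 1)).1 := by
        intro y hy
        obtain ⟨hyne, hyE⟩ := Finset.mem_erase.mp hy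
        obtain ⟨m, _, hma⟩ := hE hyE
        have hxy : x < y := lt_of_le_of_ne (E.min'_le y hyE) (Ne.symm hyne)
        have hnm : n < m := by
          apply amono.lt_iff_lt.mp
          rw [hna, hma]
          exact hxy
        have hym : y ∈ (Tn m).1 := hma ▸ hmem m
        exact Tanti (n + 1) m hnm hym
      have hcE : insert (a n) (E.erase x) = E := by
        rw [hna]; exact Finset.insert_erase (E.min'_mem hne)
      have hcard' : (E.erase x).card = k := by
        rw [Finset.card_erase_of_mem (E.min'_mem hne), hcard]
        omega
      calc c E = c (insert (a n) (E.erase x)) := by rw [hcE]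
        _ = bb n := hcol n _ herase hcard'
        _ = bv := hnS

theorem stmt8 (𝓕 : Set (Finset ℕ)) (h𝓕 : Hereditary 𝓕)
    (Nbar : Set ℕ) (hNbar : Nbar.Infinite) :
    (∃ M ⊆ Nbar, M.Infinite ∧ push Schreier1 M ⊆ 𝓕) ∨
      (∃ M ⊆ Nbar, ∃ N : Set ℕ, M.Infinite ∧ N.Infinite ∧
        push (restrict 𝓕 N) M ⊆ Schreier1) := by
  classical
  by_cases hcase : ∃ (k : ℕ) (L : Set ℕ), L ⊆ Nbar ∧ L.Infinite ∧
      ∀ E : Finset ℕ, ↑E ⊆ L → E.card = k + 1 → E ∉ 𝓕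
  · -- second alternative
    right
    obtain ⟨k, L, hLN, hLinf, hno⟩ := hcase
    have hMinf : (Nbar \ Set.Iio (k + 1)).Infinite := hNbar.diff (Set.finite_Iio _)
    refine ⟨Nbar \ Set.Iio (k + 1), Set.diff_subset, L, hMinf, hLinf, ?_⟩
    rintro F ⟨E, ⟨hE𝓕, hEL⟩, rfl⟩
    have hcard : E.card ≤ k := by
      by_contra h
      push_neg at h
      obtain ⟨E', hE'sub, hE'card⟩ := Finset.exists_subset_card_eq (s := E) (n := k + 1) h
      exact hno E' (fun x hx => hEL (hE'sub hx)) hE'card (h𝓕 hE'sub hE𝓕)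
    intro n hn
    obtain ⟨i, hiE, rfl⟩ := Finset.mem_image.mp hn
    have hmem : enum1 (Nbar \ Set.Iio (k + 1)) i ∈ Nbar \ Set.Iio (k + 1) :=
      Nat.nth_mem_of_infinite hMinf (i - 1)
    have hge : k + 1 ≤ enum1 (Nbar \ Set.Iio (k + 1)) i := not_lt.mp hmem.2
    calc (E.image (enum1 (Nbar \ Set.Iio (k + 1)))).card ≤ E.card := Finset.card_image_le
      _ ≤ enum1 (Nbar \ Set.Iio (k + 1)) i := by omega
  · -- first alternative
    left
    push_neg at hcase
    have hneg : ∀ (k : ℕ) (L : Set ℕ), L ⊆ Nbar → L.Infinite →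
        ∃ E : Finset ℕ, ↑E ⊆ L ∧ E.card = k + 1 ∧ E ∈ 𝓕 := by
      intro k L h1 h2
      obtain ⟨E, hE1, hE2, hE3⟩ := hcase k L h1 h2
      exact ⟨E, hE1, hE2, hE3⟩
    have hempty : (∅ : Finset ℕ) ∈ 𝓕 := by
      obtain ⟨E₀, _, _, hE₀⟩ := hneg 0 Nbar subset_rfl hNbar
      exact h𝓕 (Finset.empty_subset E₀) hE₀
    have key : ∀ (k : ℕ) (L : Set ℕ), L ⊆ Nbar → L.Infinite →
        ∃ L', L' ⊆ L ∧ L'.Infinite ∧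
          ∀ E : Finset ℕ, ↑E ⊆ L' → E.card = k + 1 → E ∈ 𝓕 := by
      intro k L hLN hLinf
      obtain ⟨L', hL'sub, hL'inf, bv, hbv⟩ :=
        ramsey_two (k + 1) (fun E => decide (E ∈ 𝓕)) L hLinf
      cases bv with
      | false =>
        exfalso
        obtain ⟨E, hE1, hE2, hE3⟩ := hneg k L' (hL'sub.trans hLN) hL'inf
        have := hbv E hE1 hE2
        simp only [decide_eq_false_iff_not] at this
        exact this hE3
      | true =>
        exact ⟨L', hL'sub, hL'inf, fun E h1 h2 => of_decide_eq_true (hbv E h1 h2)⟩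
    choose g hg1 hg2 hg3 using key
    let D : ℕ → {T : Set ℕ // T ⊆ Nbar ∧ T.Infinite} := fun n => Nat.rec
      ⟨Nbar, subset_rfl, hNbar⟩
      (fun k p => ⟨g k p.1 p.2.1 p.2.2, (hg1 k p.1 p.2.1 p.2.2).trans p.2.1,
        hg2 k p.1 p.2.1 p.2.2⟩) n
    have hD3 : ∀ k, ∀ E : Finset ℕ, ↑E ⊆ (D (k + 1)).1 → E.card = k + 1 → E ∈ 𝓕 :=
      fun k => hg3 k (D k).1 (D k).2.1 (D k).2.2
    have hDsub : ∀ k, (D (k + 1)).1 ⊆ (D k).1 := fun k => hg1 k (D k).1 (D k).2.1 (D k).2.2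
    have hDanti : ∀ j k, j ≤ k → (D k).1 ⊆ (D j).1 := by
      intro j k h
      induction k with
      | zero =>
        obtain rfl : j = 0 := Nat.le_zero.mp h
        exact subset_rfl
      | succ k ihk =>
        rcases Nat.lt_or_ge j (k + 1) with h' | h'
        · exact (hDsub k).trans (ihk (Nat.lt_succ_iff.mp h'))
        · obtain rfl : j = k + 1 := le_antisymm h h'
          exact subset_rfl
    let bseq : ℕ → ℕ := fun n =>
      Nat.rec (sInf (D 1).1) (fun n x => sInf ((D (n + 2)).1 \ Set.Iic x)) n
    have hbne : ∀ n x, ((D (n + 2)).1 \ Set.Iic x).Nonempty := fun n x =>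
      ((D (n + 2)).2.2.diff (Set.finite_Iic x)).nonempty
    have hbseq : ∀ n, bseq n ∈ (D (n + 1)).1 := by
      intro n
      cases n with
      | zero => exact Nat.sInf_mem (D 1).2.2.nonempty
      | succ n => exact (Nat.sInf_mem (hbne n (bseq n))).1
    have hbmono : StrictMono bseq := by
      apply strictMono_nat_of_lt_succ
      intro n
      have := (Nat.sInf_mem (hbne n (bseq n))).2
      simpa using this
    set M : Set ℕ := Set.range bseq with hM
    have hMN : M ⊆ Nbar := by
      rintro _ ⟨n, rfl⟩
      exact (D (n + 1)).2.1 (hbseq n)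
    have hMinf : M.Infinite := Set.infinite_range_of_injective hbmono.injective
    have hnth : Nat.nth (· ∈ M) = bseq := by
      refine (StrictMono.range_inj (Nat.nth_strictMono hMinf) hbmono).mp ?_
      rw [Nat.range_nth_of_infinite hMinf]
      rfl
    refine ⟨M, hMN, hMinf, ?_⟩
    rintro F ⟨E, hES, rfl⟩
    rcases E.eq_empty_or_nonempty with rfl | hEne
    · simpa using hempty
    have hk1 : 1 ≤ E.card := Finset.card_pos.mpr hEne
    have he : E.card ≤ E.min' hEne := hES (E.min' hEne) (E.min'_mem hEne)
    have henum : ∀ i ∈ E, enum1 M i = bseq (i - 1) := by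
      intro i _
      simp only [enum1, hnth]
    have hge1 : ∀ i ∈ E, 1 ≤ i := fun i hi =>
      le_trans hk1 (le_trans (hES i hi) le_rfl)
    have hsubD : ↑(E.image (enum1 M)) ⊆ (D E.card).1 := by
      intro x hx
      obtain ⟨i, hiE, rfl⟩ := Finset.mem_image.mp (Finset.mem_coe.mp hx)
      rw [henum i hiE]
      have hi1 : 1 ≤ i := hge1 i hiE
      have hie : E.card ≤ i := le_trans he (E.min'_le i hiE)
      have hmem : bseq (i - 1) ∈ (D (i - 1 + 1)).1 := hbseq (i - 1)
      rw [Nat.sub_add_cancel hi1] at hmem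
      exact hDanti E.card i hie hmem
    have hcardF : (E.image (enum1 M)).card = E.card := by
      apply Finset.card_image_of_injOn
      intro i hi j hj hij
      rw [henum i hi, henum j hj] at hij
      have := hbmono.injective hij
      have hi1 := hge1 i hi
      have hj1 := hge1 j hj
      omega
    obtain ⟨k', hk'⟩ : ∃ k', E.card = k' + 1 := ⟨E.card - 1, by omega⟩
    apply hD3 k'
    · rw [← hk']; exact hsubD
    · rw [hcardF, hk']
end

section
/- If F is an adequate family of finite subsets of ℕ, L is infinite, and s(F[L]) > α, then s(F[M]) > α for every infinite M ⊆ L. -/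
open Ordinal Set

lemma sDeriv_zero' (G L) : sDeriv G L 0 = restrict G L :=
  Ordinal.limitRecOn_zero _ _ _

lemma sDeriv_succ' (G L β) : sDeriv G L (Order.succ β) =
    {A ∈ sDeriv G L β | {l ∈ L | insert l A ∉ sDeriv G L β}.Finite} :=
  Ordinal.limitRecOn_succ _ _ _ _

lemma sDeriv_limit' (G L) {o : Ordinal} (ho : Order.IsSuccLimit o) :
    sDeriv G L o = ⋂ (b : Set.Iio o), sDeriv G L b :=
  Ordinal.limitRecOn_limit _ _ _ _ ho

lemma sDeriv_anti (G : Set (Finset ℕ)) (L : Set ℕ) :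
    ∀ γ β, β ≤ γ → sDeriv G L γ ⊆ sDeriv G L β := by
  intro γ
  induction γ using Ordinal.induction with
  | h γ IH =>
    intro β hβ
    rcases Ordinal.zero_or_succ_or_isSuccLimit γ with h0 | ⟨δ, hδ⟩ | hlim
    · subst h0; rw [nonpos_iff_eq_zero.mp hβ]
    · subst hδ
      rcases eq_or_lt_of_le hβ with h | h
      · rw [h]
      · have hβδ : β ≤ δ := Order.lt_succ_iff.mp h
        refine subset_trans ?_ (IH δ (Order.lt_succ δ) β hβδ)
        rw [sDeriv_succ']; exact sep_subset _ _
    · rcases eq_or_lt_of_le hβ with h | h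
      · rw [h]
      · rw [sDeriv_limit' G L hlim]
        intro A hA
        exact mem_iInter.mp hA ⟨β, h⟩

lemma sDeriv_hered {G : Set (Finset ℕ)} (hG : Hereditary G)
    (L : Set ℕ) : ∀ β, ∀ A B : Finset ℕ, A ⊆ B → B ∈ sDeriv G L β → A ∈ sDeriv G L β := by
  intro β
  induction β using Ordinal.induction with
  | h β IH =>
    intro A B hAB hB
    rcases Ordinal.zero_or_succ_or_isSuccLimit β with h0 | ⟨δ, hδ⟩ | hlim
    · subst h0
      rw [sDeriv_zero'] at *
      exact ⟨hG hAB hB.1, subset_trans (by exact_mod_cast Finset.coe_subset.mpr hAB) hB.2⟩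
    · subst hδ
      rw [sDeriv_succ'] at *
      refine ⟨IH δ (Order.lt_succ δ) A B hAB hB.1, hB.2.subset ?_⟩
      intro l hl
      refine ⟨hl.1, fun h => hl.2 ?_⟩
      exact IH δ (Order.lt_succ δ) _ _ (Finset.insert_subset_insert l hAB) h
    · rw [sDeriv_limit' G L hlim] at *
      exact mem_iInter.mpr fun b => IH b b.2 A B hAB (mem_iInter.mp hB b)

lemma sDeriv_transfer (G : Set (Finset ℕ)) {L M : Set ℕ} (hML : M ⊆ L) :
    ∀ β, ∀ A : Finset ℕ, (A : Set ℕ) ⊆ M → A ∈ sDeriv G L β → A ∈ sDeriv G M β := by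
  intro β
  induction β using Ordinal.induction with
  | h β IH =>
    intro A hAM hA
    rcases Ordinal.zero_or_succ_or_isSuccLimit β with h0 | ⟨δ, hδ⟩ | hlim
    · subst h0
      rw [sDeriv_zero'] at *
      exact ⟨hA.1, hAM⟩
    · subst hδ
      rw [sDeriv_succ'] at *
      refine ⟨IH δ (Order.lt_succ δ) A hAM hA.1, hA.2.subset ?_⟩
      intro l hl
      refine ⟨hML hl.1, fun h => hl.2 ?_⟩
      refine IH δ (Order.lt_succ δ) _ ?_ h
      rw [Finset.coe_insert]
      exact insert_subset hl.1 hAM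
    · rw [sDeriv_limit' G L hlim] at hA
      rw [sDeriv_limit' G M hlim]
      exact mem_iInter.mpr fun b => IH b b.2 A hAM (mem_iInter.mp hA b)

universe u

lemma sDeriv_exists_empty {𝓕 : Set (Finset ℕ)} (hh : Hereditary 𝓕)
    (hc : PtwiseClosed 𝓕) {M : Set ℕ} (hM : M.Infinite) :
    ∃ β : Ordinal.{u}, sDeriv 𝓕 M β = ∅ := by
  classical
  by_contra hcon
  push_neg at hcon
  have hempty : ∀ β : Ordinal.{u}, (∅ : Finset ℕ) ∈ sDeriv 𝓕 M β := fun β => by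
    obtain ⟨A, hA⟩ := hcon β
    exact sDeriv_hered hh M β ∅ A (Finset.empty_subset A) hA
  set S : Set (Finset ℕ) := {A | ∀ β : Ordinal.{u}, A ∈ sDeriv 𝓕 M β} with hS
  have hSF : S ⊆ 𝓕 := by
    intro A hA
    have := hA 0
    rw [sDeriv_zero'] at this
    exact this.1
  have hSext : ∀ A ∈ S, {l ∈ M | insert l A ∉ S}.Finite := by
    intro A hA
    by_contra hfin
    set B := {l ∈ M | insert l A ∉ S} with hB
    have hBinf : B.Infinite := fun h => hfin h
    set r : ℕ → Ordinal := fun l => sInf {β | insert l A ∉ sDeriv 𝓕 M β} with hr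
    have hkey : ∀ l ∈ B, insert l A ∉ sDeriv 𝓕 M (r l) := by
      intro l hl
      have hne' : {β | insert l A ∉ sDeriv 𝓕 M β}.Nonempty := by
        by_contra h
        rw [not_nonempty_iff_eq_empty] at h
        apply hl.2
        intro β
        by_contra hβ
        have : β ∈ {β | insert l A ∉ sDeriv 𝓕 M β} := hβ
        rw [h] at this
        exact this
      exact csInf_mem hne'
    set β' : Ordinal := ⨆ l : ℕ, r l with hβ'
    have hle : ∀ l, r l ≤ β' := fun l => Ordinal.le_iSup r l
    have hAmem := hA (Order.succ β')
    rw [sDeriv_succ'] at hAmem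
    refine hBinf (hAmem.2.subset ?_)
    intro l hl
    refine ⟨hl.1, fun h => hkey l hl (sDeriv_anti 𝓕 M β' (r l) (hle l) h)⟩
  have step : ∀ A ∈ S, ∀ b : ℕ, ∃ l, l ∈ M ∧ b < l ∧ insert l A ∈ S := by
    intro A hA b
    have hinf : (M \ ({l ∈ M | insert l A ∉ S} ∪ {l | l ≤ b})).Infinite :=
      hM.diff ((hSext A hA).union (finite_le_nat b))
    obtain ⟨l, hlM, hlN⟩ := hinf.nonempty
    rw [mem_union] at hlN
    push_neg at hlN
    refine ⟨l, hlM, lt_of_not_ge hlN.2, ?_⟩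
    by_contra h
    exact hlN.1 ⟨hlM, h⟩
  have step' : ∀ p : {q : Finset ℕ × ℕ // q.1 ∈ S},
      ∃ l, l ∈ M ∧ p.1.2 < l ∧ insert l p.1.1 ∈ S := fun p => step p.1.1 p.2 p.1.2
  choose f hf using step'
  let g : ℕ → {q : Finset ℕ × ℕ // q.1 ∈ S} := fun n =>
    Nat.rec ⟨(∅, 0), fun β => hempty β⟩
      (fun _ p => ⟨(insert (f p) p.1.1, f p), (hf p).2.2⟩) n
  set A : ℕ → Finset ℕ := fun n => (g n).1.1 with hAdef
  set b : ℕ → ℕ := fun n => (g n).1.2 with hbdef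
  have hgsucc : ∀ n, A (n + 1) = insert (f (g n)) (A n) ∧ b (n + 1) = f (g n) :=
    fun n => ⟨rfl, rfl⟩
  have hbmono : StrictMono b := by
    apply strictMono_nat_of_lt_succ
    intro n
    rw [(hgsucc n).2]
    exact (hf (g n)).2.1
  have hAmono : Monotone A := monotone_nat_of_le_succ fun n => by
    rw [(hgsucc n).1]; exact Finset.subset_insert _ _
  have hAsub : ∀ m n, m ≤ n → A m ⊆ A n := fun m n h => hAmono h
  have hbA : ∀ n, b (n + 1) ∈ A (n + 1) := by
    intro n
    rw [(hgsucc n).1, (hgsucc n).2]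
    exact Finset.mem_insert_self _ _
  set x : ℕ → Bool := fun n => decide (∃ k, n ∈ A k) with hx
  have htend : Filter.Tendsto (fun k => chi (A k)) Filter.atTop (nhds x) := by
    rw [tendsto_pi_nhds]
    intro n
    by_cases hn : ∃ k, n ∈ A k
    · obtain ⟨k0, hk0⟩ := hn
      refine Filter.Tendsto.congr' ?_ tendsto_const_nhds
      rw [Filter.EventuallyEq, Filter.eventually_atTop]
      refine ⟨k0, fun k hk => ?_⟩
      have hmem : n ∈ A k := hAsub k0 k hk hk0
      simp only [hx, chi]
      rw [decide_eq_decide]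
      exact ⟨fun _ => hmem, fun _ => ⟨k0, hk0⟩⟩
    · refine Filter.Tendsto.congr' ?_ tendsto_const_nhds
      rw [Filter.EventuallyEq, Filter.eventually_atTop]
      refine ⟨0, fun k _ => ?_⟩
      simp only [hx, chi]
      rw [decide_eq_decide]
      exact ⟨fun h => absurd h hn, fun h => absurd ⟨k, h⟩ hn⟩
  have hxmem : x ∈ chi '' 𝓕 :=
    hc.mem_of_tendsto htend (Filter.Eventually.of_forall fun k => ⟨A k, hSF (g k).2, rfl⟩)
  obtain ⟨F, hF, hFx⟩ := hxmem
  have hbF : ∀ k, b (k + 1) ∈ F := by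
    intro k
    have : chi F (b (k + 1)) = x (b (k + 1)) := by rw [hFx]
    simp only [chi, hx] at this
    rw [decide_eq_decide] at this
    exact this.mpr ⟨k + 1, hbA k⟩
  set N := F.sup id with hN
  have h1 : b (N + 1) ≤ N := Finset.le_sup (f := id) (hbF N)
  have h2 : N + 1 ≤ b (N + 1) := hbmono.le_apply
  omega

theorem stmt13 (𝓕 : Set (Finset ℕ)) (h𝓕 : Adequate 𝓕)
    (L : Set ℕ) (hL : L.Infinite) (α : Ordinal) (hα : α < sIndex 𝓕 L)
    (M : Set ℕ) (hML : M ⊆ L) (hM : M.Infinite) :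
    α < sIndex 𝓕 M := by
  obtain ⟨hh, hc⟩ := h𝓕
  -- sDeriv 𝓕 L α is nonempty
  have hLne : (sDeriv 𝓕 L α).Nonempty := by
    rw [nonempty_iff_ne_empty]
    intro h
    exact absurd (csInf_le' (s := {β | sDeriv 𝓕 L β = ∅}) h) (not_le.mpr hα)
  have hLempty : (∅ : Finset ℕ) ∈ sDeriv 𝓕 L α := by
    obtain ⟨A, hA⟩ := hLne
    exact sDeriv_hered hh L α ∅ A (Finset.empty_subset A) hA
  have hMempty : (∅ : Finset ℕ) ∈ sDeriv 𝓕 M α := by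
    refine sDeriv_transfer 𝓕 hML α ∅ ?_ hLempty
    simp
  obtain ⟨β, hβ⟩ := sDeriv_exists_empty hh hc hM
  have hTne : {β | sDeriv 𝓕 M β = ∅}.Nonempty := ⟨β, hβ⟩
  have hidx : sDeriv 𝓕 M (sIndex 𝓕 M) = ∅ := csInf_mem hTne
  by_contra h
  rw [not_lt] at h
  have := sDeriv_anti 𝓕 M α (sIndex 𝓕 M) h hMempty
  rw [hidx] at this
  exact this
end
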